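/- Let n ≥ 4 and let ℓ_{a,b} : 𝒞_B(ℝⁿ) → 𝒞_B(ℝⁿ) be the Böhm–Wilking linear map ℓ_{a,b}(R) = R + b·Ric(R) ⊙ id + (1/n)(a−b)·scal(R)·id ⊙ id, where ⊙ is the Kulkarni–Nomizu product. Then ℓ_{a,b} maps the space of algebraic curvature tensors to itself, is linear, and is invertible when 1 + (n−2)b ≠ 0 and 1 + 2(n−1)a ≠ 0. -/

import Mathlib

open scoped BigOperators

/-- A curvature-type 4-tensor on `ℝⁿ`, given by its components. -/
abbrev CurvTensor (n : ℕ) := Fin n → Fin n → Fin n → Fin n → ℝ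

/-- The symmetries of an algebraic curvature tensor: antisymmetry in the first pair,
symmetry under interchange of the pairs, and the first Bianchi identity. -/
def IsAlgCurv {n : ℕ} (T : CurvTensor n) : Prop :=
  (∀ i j k l, T i j k l = - T j i k l) ∧
  (∀ i j k l, T i j k l = T k l i j) ∧
  (∀ i j k l, T i j k l + T i k l j + T i l j k = 0)

/-- Evaluation of a 4-tensor on vectors of `ℝⁿ`. -/
def ev {n : ℕ} (T : CurvTensor n) (v₁ v₂ v₃ v₄ : EuclideanSpace ℝ (Fin n)) : ℝ :=
  ∑ i, ∑ j, ∑ k, ∑ l, T i j k l * v₁ i * v₂ j * v₃ k * v₄ l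

/-- The scalar curvature of a curvature tensor. -/
def scal {n : ℕ} (T : CurvTensor n) : ℝ := ∑ i, ∑ j, T i j i j

/-- The Ricci curvature of a curvature tensor: `Ric(T)_{ik} = Σ_j T_{ijkj}`. -/
def ricci {n : ℕ} (T : CurvTensor n) : Fin n → Fin n → ℝ :=
  fun i k => ∑ j, T i j k j

/-- The Kulkarni–Nomizu product of two symmetric bilinear forms, as a 4-tensor. -/
def KN {n : ℕ} (A B : Fin n → Fin n → ℝ) : CurvTensor n :=
  fun i j k l => A i k * B j l + A j l * B i k - A i l * B j k - A j k * B i l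

/-- The identity bilinear form `δ_{ij}`. -/
def idForm (n : ℕ) : Fin n → Fin n → ℝ := fun i j => if i = j then 1 else 0

/-- The Böhm–Wilking map `ℓ_{a,b}(R) = R + b·Ric(R) ⊙ id + (1/n)(a-b)·scal(R)·id ⊙ id`. -/
noncomputable def ellab (n : ℕ) (a b : ℝ) (T : CurvTensor n) : CurvTensor n :=
  T + b • KN (ricci T) (idForm n) + (((a - b) / n) * scal T) • KN (idForm n) (idForm n)


/-! ### Auxiliary lemmas for `stmt17` -/

lemma ricci_KN {n : ℕ} (A : Fin n → Fin n → ℝ) (i k : Fin n) :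
    ricci (KN A (idForm n)) i k = ((n:ℝ) - 2) * A i k + (∑ j, A j j) * idForm n i k := by
  simp [ricci, KN, idForm, Finset.sum_add_distrib, Finset.sum_sub_distrib, mul_ite, ite_mul,
    mul_one, mul_zero, one_mul, zero_mul, Finset.sum_ite_eq, Finset.sum_ite_eq',
    Finset.sum_const, Finset.card_univ, ← Finset.sum_mul]
  ring

/-- An auxiliary reparametrized form of the Böhm–Wilking map, with no divisions. -/
noncomputable def gen (n : ℕ) (b c : ℝ) (T : CurvTensor n) : CurvTensor n :=
  T + b • KN (ricci T) (idForm n) + (c * scal T) • KN (idForm n) (idForm n)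

lemma tr_ricci {n : ℕ} (T : CurvTensor n) : (∑ j, ricci T j j) = scal T := rfl

lemma tr_id (n : ℕ) : (∑ j : Fin n, idForm n j j) = (n : ℝ) := by
  simp [idForm]

lemma ricci_gen {n : ℕ} (b c : ℝ) (T : CurvTensor n) (i k : Fin n) :
    ricci (gen n b c T) i k =
      (1 + ((n:ℝ) - 2) * b) * ricci T i k
        + (b + 2 * ((n:ℝ) - 1) * c) * scal T * idForm n i k := by
  have h1 := ricci_KN (ricci T) i k
  have h2 := ricci_KN (idForm n) i k
  simp only [ricci, gen, Pi.add_apply, Pi.smul_apply, smul_eq_mul,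
    Finset.sum_add_distrib, ← Finset.mul_sum] at *
  rw [h1, h2, tr_id, show (∑ x : Fin n, ∑ j : Fin n, T x j x j) = scal T from rfl]
  by_cases h : i = k <;> simp [idForm, h] <;> ring

lemma scal_gen {n : ℕ} (b c : ℝ) (T : CurvTensor n) :
    scal (gen n b c T) = (1 + 2 * ((n:ℝ) - 1) * (b + (n:ℝ) * c)) * scal T := by
  have : scal (gen n b c T) = ∑ i, ricci (gen n b c T) i i := rfl
  rw [this]
  simp only [ricci_gen]
  simp [Finset.sum_add_distrib, ← Finset.sum_mul, ← Finset.mul_sum, tr_ricci, tr_id, idForm,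
    scal]
  ring

lemma gen_zero {n : ℕ} (T : CurvTensor n) : gen n 0 0 T = T := by
  funext i j k l
  simp [gen]

lemma gen_comp {n : ℕ} (b c b' c' : ℝ) (T : CurvTensor n) :
    gen n b' c' (gen n b c T) =
      gen n (b + b' * (1 + ((n:ℝ) - 2) * b))
        (c + b' * (b + 2 * ((n:ℝ) - 1) * c) + c' * (1 + 2 * ((n:ℝ) - 1) * (b + (n:ℝ) * c))) T := by
  have hr : ricci (gen n b c T) = fun i k =>
      (1 + ((n:ℝ) - 2) * b) * ricci T i k
        + (b + 2 * ((n:ℝ) - 1) * c) * scal T * idForm n i k := by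
    funext i k; exact ricci_gen b c T i k
  funext i j k l
  show (gen n b c T) i j k l + b' * KN (ricci (gen n b c T)) (idForm n) i j k l
      + (c' * scal (gen n b c T)) * KN (idForm n) (idForm n) i j k l = _
  rw [hr, scal_gen]
  simp only [gen, KN, Pi.add_apply, Pi.smul_apply, smul_eq_mul]
  ring

lemma ricci_symm {n : ℕ} {T : CurvTensor n} (hT : IsAlgCurv T) (i k : Fin n) :
    ricci T i k = ricci T k i := by
  unfold ricci
  exact Finset.sum_congr rfl fun j _ => hT.2.1 i j k j

lemma idForm_symm (n : ℕ) (i j : Fin n) : idForm n i j = idForm n j i := by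
  simp [idForm, eq_comm]

lemma isAlg_KN {n : ℕ} {A B : Fin n → Fin n → ℝ}
    (hA : ∀ i j, A i j = A j i) (hB : ∀ i j, B i j = B j i) : IsAlgCurv (KN A B) := by
  refine ⟨fun i j k l => by simp only [KN]; ring, fun i j k l => ?_, fun i j k l => ?_⟩
  · simp only [KN]
    linear_combination B j l * hA i k + A k i * hB j l + B i k * hA j l + A l j * hB i k
      - B j k * hA i l - A l i * hB j k - B i l * hA j k - A k j * hB i l
  · simp only [KN]
    linear_combination A i k * hB j l + B i k * hA j l - A i l * hB j k - B i l * hA j k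
      - A i j * hB k l - B i j * hA k l

lemma isAlg_gen {n : ℕ} (b c : ℝ) {T : CurvTensor n} (hT : IsAlgCurv T) :
    IsAlgCurv (gen n b c T) := by
  have h1 := isAlg_KN (ricci_symm hT) (idForm_symm n)
  have h2 := isAlg_KN (idForm_symm n) (idForm_symm n)
  refine ⟨fun i j k l => ?_, fun i j k l => ?_, fun i j k l => ?_⟩
  · simp only [gen, Pi.add_apply, Pi.smul_apply, smul_eq_mul]
    rw [hT.1 i j k l, h1.1 i j k l, h2.1 i j k l]; ring
  · simp only [gen, Pi.add_apply, Pi.smul_apply, smul_eq_mul]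
    rw [hT.2.1 i j k l, h1.2.1 i j k l, h2.2.1 i j k l]
  · simp only [gen, Pi.add_apply, Pi.smul_apply, smul_eq_mul]
    linear_combination hT.2.2 i j k l + b * h1.2.2 i j k l + (c * scal T) * h2.2.2 i j k l

lemma ricci_add {n : ℕ} (T T' : CurvTensor n) :
    ricci (T + T') = ricci T + ricci T' := by
  funext i k; simp [ricci, Finset.sum_add_distrib]

lemma scal_add {n : ℕ} (T T' : CurvTensor n) : scal (T + T') = scal T + scal T' := by
  simp [scal, Finset.sum_add_distrib]

lemma ricci_smul {n : ℕ} (r : ℝ) (T : CurvTensor n) :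
    ricci (r • T) = fun i k => r * ricci T i k := by
  funext i k; simp [ricci, Finset.mul_sum]

lemma scal_smul {n : ℕ} (r : ℝ) (T : CurvTensor n) : scal (r • T) = r * scal T := by
  simp [scal, Finset.mul_sum]

lemma gen_add {n : ℕ} (b c : ℝ) (T T' : CurvTensor n) :
    gen n b c (T + T') = gen n b c T + gen n b c T' := by
  funext i j k l
  simp only [gen, Pi.add_apply, Pi.smul_apply, smul_eq_mul, KN, ricci_add, scal_add]
  ring

lemma gen_smul {n : ℕ} (b c : ℝ) (r : ℝ) (T : CurvTensor n) :
    gen n b c (r • T) = r • gen n b c T := by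
  funext i j k l
  simp only [gen, Pi.add_apply, Pi.smul_apply, smul_eq_mul, KN, ricci_smul, scal_smul]
  ring

/-- The Böhm–Wilking map `ℓ_{a,b}` preserves the space of algebraic curvature tensors,
is linear, and is invertible (a bijection of the space of algebraic curvature tensors
onto itself) whenever `1 + (n-2)b ≠ 0` and `1 + 2(n-1)a ≠ 0`. -/
theorem stmt17 (n : ℕ) (hn : 4 ≤ n) (a b : ℝ) :
    (∀ T : CurvTensor n, IsAlgCurv T → IsAlgCurv (ellab n a b T)) ∧
    (∀ T T' : CurvTensor n, ellab n a b (T + T') = ellab n a b T + ellab n a b T') ∧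
    (∀ (c : ℝ) (T : CurvTensor n), ellab n a b (c • T) = c • ellab n a b T) ∧
    (1 + ((n:ℝ) - 2) * b ≠ 0 → 1 + 2 * ((n:ℝ) - 1) * a ≠ 0 →
      Set.BijOn (ellab n a b) {T : CurvTensor n | IsAlgCurv T}
        {T : CurvTensor n | IsAlgCurv T}) := by
  have hn0 : (n:ℝ) ≠ 0 := Nat.cast_ne_zero.mpr (by omega)
  have hellab : ∀ (a b : ℝ), ellab n a b = gen n b ((a - b) / n) := fun a b => rfl
  refine ⟨?_, ?_, ?_, ?_⟩
  · intro T hT; rw [hellab]; exact isAlg_gen _ _ hT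
  · intro T T'; rw [hellab]; exact gen_add _ _ T T'
  · intro r T; rw [hellab]; exact gen_smul _ _ r T
  · intro hb ha
    set c : ℝ := (a - b) / n with hc
    set b' : ℝ := -b / (1 + ((n:ℝ) - 2) * b) with hb'
    set a' : ℝ := -a / (1 + 2 * ((n:ℝ) - 1) * a) with ha'
    set c' : ℝ := (a' - b') / n with hc'
    have key1 : b + b' * (1 + ((n:ℝ) - 2) * b) = 0 := by
      rw [hb']; have hb2 : 1 + b * ((n:ℝ) - 2) ≠ 0 := by convert hb using 1; ring
      field_simp; ring
    have key2 : c + b' * (b + 2 * ((n:ℝ) - 1) * c)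
        + c' * (1 + 2 * ((n:ℝ) - 1) * (b + (n:ℝ) * c)) = 0 := by
      have hA : a' * (1 + 2 * ((n:ℝ) - 1) * a) = -a := by rw [ha']; exact div_mul_cancel₀ _ ha
      have hB : b' * (1 + ((n:ℝ) - 2) * b) = -b := by rw [hb']; exact div_mul_cancel₀ _ hb
      have hnn : (n:ℝ) * (n:ℝ)⁻¹ = 1 := mul_inv_cancel₀ hn0
      have hbc : b + (n:ℝ) * c = a := by rw [hc]; linear_combination (a - b) * hnn
      rw [hbc, hc', hc]
      linear_combination (n:ℝ)⁻¹ * hA - (n:ℝ)⁻¹ * hB - b' * b * hnn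
    have key1' : b' + b * (1 + ((n:ℝ) - 2) * b') = 0 := by
      rw [hb']; have hb2 : 1 + b * ((n:ℝ) - 2) ≠ 0 := by convert hb using 1; ring
      field_simp; ring
    have key2' : c' + b * (b' + 2 * ((n:ℝ) - 1) * c')
        + c * (1 + 2 * ((n:ℝ) - 1) * (b' + (n:ℝ) * c')) = 0 := by
      have hA : a' * (1 + 2 * ((n:ℝ) - 1) * a) = -a := by rw [ha']; exact div_mul_cancel₀ _ ha
      have hA' : a * (1 + 2 * ((n:ℝ) - 1) * a') = -a' := by linear_combination hA
      have hB' : b * (1 + ((n:ℝ) - 2) * b') = -b' := by linear_combination key1'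
      have hnn : (n:ℝ) * (n:ℝ)⁻¹ = 1 := mul_inv_cancel₀ hn0
      have hbc : b' + (n:ℝ) * c' = a' := by rw [hc']; linear_combination (a' - b') * hnn
      rw [hbc, hc', hc]
      linear_combination (n:ℝ)⁻¹ * hA' - (n:ℝ)⁻¹ * hB' - b * b' * hnn
    have hgf : ∀ T : CurvTensor n, gen n b' c' (gen n b c T) = T := by
      intro T; rw [gen_comp, key1, key2, gen_zero]
    have hfg : ∀ T : CurvTensor n, gen n b c (gen n b' c' T) = T := by
      intro T; rw [gen_comp, key1', key2', gen_zero]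
    rw [hellab]
    exact Set.InvOn.bijOn ⟨fun T _ => hgf T, fun T _ => hfg T⟩
      (fun T hT => isAlg_gen _ _ hT) (fun T hT => isAlg_gen _ _ hT)
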